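/- For every rational number c ∉ {0, 1, −1}, the point 0 is a periodic point of exact period 4 for the rational map φ_c(x) = ((c + c² − c³)x − c²)/((c³ − c² − c + 1)x² − (c³ − c² − c)x − c²); specifically, the orbit of 0 under φ_c is 0 ↦ 1 ↦ c ↦ −c/(c² − c − 1) ↦ 0, and these four points are distinct. -/

import Mathlib

/-- The quadratic rational map `φ_c` on `ℙ¹(ℚ) = ℚ ∪ {∞}` (with `∞` encoded as `none`),
given by `φ_c(x) = ((c + c² − c³)x − c²)/((c³ − c² − c + 1)x² − (c³ − c² − c)x − c²)`.
Since the denominator has larger degree than the numerator, `φ_c(∞) = 0`. -/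
noncomputable def phiC4 (c : ℚ) : Option ℚ → Option ℚ
  | none => some 0
  | some x =>
      if (c^3 - c^2 - c + 1)*x^2 - (c^3 - c^2 - c)*x - c^2 = 0 then none
      else some (((c + c^2 - c^3)*x - c^2) /
        ((c^3 - c^2 - c + 1)*x^2 - (c^3 - c^2 - c)*x - c^2))

lemma q_ne_zero (c : ℚ) : c^2 - c - 1 ≠ 0 := by
  intro h
  have h5 : Irrational (Real.sqrt 5) := by
    rw [show (5:ℝ) = ((5:ℕ):ℝ) by norm_num, irrational_sqrt_natCast_iff]
    rintro ⟨r, hr⟩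
    have : r < 3 := by nlinarith
    interval_cases r <;> omega
  have hsq : ((|2*c - 1| : ℚ) : ℝ)^2 = 5 := by
    push_cast
    rw [sq_abs]
    have : (c:ℝ)^2 - c - 1 = 0 := by exact_mod_cast congrArg (Rat.cast : ℚ → ℝ) h
    nlinarith [this]
  have : Real.sqrt 5 = ((|2*c - 1| : ℚ) : ℝ) := by
    rw [show (5:ℝ) = ((|2*c - 1| : ℚ) : ℝ)^2 from hsq.symm]
    exact Real.sqrt_sq (by positivity)
  exact h5 ⟨_, this.symm⟩

/-- For every rational `c ∉ {0, 1, −1}`, the point `0` is periodic of exact period 4 for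
`φ_c`, with orbit `0 ↦ 1 ↦ c ↦ −c/(c² − c − 1) ↦ 0`, the four points being distinct. -/
theorem stmt_1 (c : ℚ) (hc0 : c ≠ 0) (hc1 : c ≠ 1) (hcm1 : c ≠ -1) :
    phiC4 c (some 0) = some 1 ∧
    phiC4 c (some 1) = some c ∧
    phiC4 c (some c) = some (-c/(c^2 - c - 1)) ∧
    phiC4 c (some (-c/(c^2 - c - 1))) = some 0 ∧
    ([some 0, some 1, some c, some (-c/(c^2 - c - 1))] : List (Option ℚ)).Pairwise (· ≠ ·) ∧
    (phiC4 c)^[4] (some 0) = some 0 ∧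
    ∀ n : ℕ, 0 < n → n < 4 → (phiC4 c)^[n] (some 0) ≠ some 0 := by
  have hq : c^2 - c - 1 ≠ 0 := q_ne_zero c
  have hc1' : c - 1 ≠ 0 := sub_ne_zero.mpr hc1
  have hcm1' : c + 1 ≠ 0 := by intro h; apply hcm1; linarith
  have h0 : phiC4 c (some 0) = some 1 := by
    simp only [phiC4]
    rw [if_neg (by intro h; apply hc0; nlinarith [sq_nonneg c])]
    congr 1
    field_simp
    ring
  have h1 : phiC4 c (some 1) = some c := by
    have hd : (c^3 - c^2 - c + 1)*1^2 - (c^3 - c^2 - c)*1 - c^2 = (1-c)*(1+c) := by ring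
    simp only [phiC4]
    rw [if_neg (by rw [hd]; exact mul_ne_zero (by intro h; apply hc1; linarith) (by intro h; apply hcm1; linarith))]
    congr 1
    rw [div_eq_iff (by rw [hd]; exact mul_ne_zero (by intro h; apply hc1; linarith) (by intro h; apply hcm1; linarith))]
    ring
  have hdc : (c^3 - c^2 - c + 1)*c^2 - (c^3 - c^2 - c)*c - c^2 = c^2*(c-1)*(c^2-c-1) := by ring
  have hdcne : (c^3 - c^2 - c + 1)*c^2 - (c^3 - c^2 - c)*c - c^2 ≠ 0 := by
    rw [hdc]; exact mul_ne_zero (mul_ne_zero (pow_ne_zero 2 hc0) hc1') hq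
  have h2 : phiC4 c (some c) = some (-c/(c^2 - c - 1)) := by
    simp only [phiC4]
    rw [if_neg hdcne]
    congr 1
    rw [div_eq_div_iff hdcne hq]
    ring
  have h3 : phiC4 c (some (-c/(c^2 - c - 1))) = some 0 := by
    have hx : (-c/(c^2 - c - 1)) = -c/(c^2-c-1) := rfl
    have hdval : (c^3 - c^2 - c + 1)*(-c/(c^2-c-1))^2 - (c^3 - c^2 - c)*(-c/(c^2-c-1)) - c^2
        = c^2*(c-1)^2*(c+1)/(c^2-c-1)^2 := by
      have hx' : (-c/(c^2-c-1)) * (c^2-c-1) = -c := div_mul_cancel₀ _ hq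
      rw [eq_div_iff (pow_ne_zero 2 hq)]
      linear_combination ((c^3 - c^2 - c + 1)*((-c/(c^2-c-1)) * (c^2-c-1) - c) - (c^3 - c^2 - c)*(c^2-c-1)) * hx'
    simp only [phiC4]
    rw [if_neg (by
      rw [hdval]
      exact div_ne_zero (mul_ne_zero (mul_ne_zero (pow_ne_zero 2 hc0) (pow_ne_zero 2 hc1')) hcm1') (pow_ne_zero 2 hq))]
    congr 1
    rw [div_eq_zero_iff]
    left
    rw [mul_div_assoc', div_sub' hq, div_eq_zero_iff]
    left
    ring
  refine ⟨h0, h1, h2, h3, ?_, ?_, ?_⟩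
  · have hne0 : -c/(c^2 - c - 1) ≠ 0 := div_ne_zero (neg_ne_zero.mpr hc0) hq
    have hne1 : -c/(c^2 - c - 1) ≠ 1 := by
      intro h
      rw [div_eq_iff hq, one_mul] at h
      have : (c-1)*(c+1) = 0 := by nlinarith [h]
      rcases mul_eq_zero.mp this with h' | h' <;> [exact hc1' h'; exact hcm1' h']
    have hnec : -c/(c^2 - c - 1) ≠ c := by
      intro h
      rw [div_eq_iff hq] at h
      have : c * (c * (c - 1)) = 0 := by nlinarith [h]
      rcases mul_eq_zero.mp this with h' | h'
      · exact hc0 h'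
      · rcases mul_eq_zero.mp h' with h'' | h''
        · exact hc0 h''
        · exact hc1' h''
    simp [List.pairwise_cons, hc0.symm, hc1.symm, hne0.symm, hne1.symm, hnec.symm]
  · show phiC4 c (phiC4 c (phiC4 c (phiC4 c (some 0)))) = some 0
    rw [h0, h1, h2, h3]
  · intro n hn1 hn4
    interval_cases n
    · show phiC4 c (some 0) ≠ some 0
      rw [h0]; simp
    · show phiC4 c (phiC4 c (some 0)) ≠ some 0
      rw [h0, h1]; simpa using hc0
    · show phiC4 c (phiC4 c (phiC4 c (some 0))) ≠ some 0
      rw [h0, h1, h2]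
      simpa using div_ne_zero (neg_ne_zero.mpr hc0) hq
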